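/- arXiv:2108.01345 — 2 statements merged into one kernel-verified Lean document; each statement's English description precedes it below -/
import Mathlib

section
/- Assume (A1) and (A2). Then every nonzero eigenvalue λ of 𝒦 satisfies |λ| < 1. Equivalently, 𝕋₂₂(ξ) ≠ 0 for every ξ ∈ ℂ with Im ξ ≥ 0, so the scattering matrix has no pole in the closed upper half strip. -/
open Complex Matrix

noncomputable section

/-- states: `ℂ²` -/
abbrev C2 : Type := Fin 2 → ℂ

/-- `P n = |L⟩⟨L| U n` -/
def Pmat (U : ℤ → Matrix (Fin 2) (Fin 2) ℂ) (n : ℤ) : Matrix (Fin 2) (Fin 2) ℂ :=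
  Matrix.of fun i j => if i = 0 then U n 0 j else 0

/-- `Q n = |R⟩⟨R| U n` -/
def Qmat (U : ℤ → Matrix (Fin 2) (Fin 2) ℂ) (n : ℤ) : Matrix (Fin 2) (Fin 2) ℂ :=
  Matrix.of fun i j => if i = 1 then U n 1 j else 0

/-- the time evolution operator `𝒰`: `(𝒰ψ)(n) = P_{n+1}ψ(n+1) + Q_{n-1}ψ(n-1)` -/
def QWop (U : ℤ → Matrix (Fin 2) (Fin 2) ℂ) (ψ : ℤ → C2) : ℤ → C2 :=
  fun n => (Pmat U (n + 1)).mulVec (ψ (n + 1)) + (Qmat U (n - 1)).mulVec (ψ (n - 1))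

/-- all local coins are unitary -/
def CoinsUnitary (U : ℤ → Matrix (Fin 2) (Fin 2) ℂ) : Prop :=
  ∀ n : ℤ, U n ∈ Matrix.unitaryGroup (Fin 2) ℂ

/-- Assumption (A1): `U n = I₂` outside `[n₀] = {0,…,n₀}` -/
def A1 (n0 : ℕ) (U : ℤ → Matrix (Fin 2) (Fin 2) ℂ) : Prop :=
  ∀ n : ℤ, n < 0 ∨ (n0 : ℤ) < n → U n = 1

/-- Assumption (A2): `a n ≠ 0` for all `n` -/
def A2 (U : ℤ → Matrix (Fin 2) (Fin 2) ℂ) : Prop :=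
  ∀ n : ℤ, U n 0 0 ≠ 0

/-- the restriction `𝒦` of `𝒰` to `ℓ²([n₀];ℂ²) ≅ ℂ^{2(n₀+1)}`, as a matrix:
`(𝒦v)(n) = P_{n+1}v(n+1) + Q_{n-1}v(n-1)` with the convention that out-of-range terms vanish. -/
def Kmat (n0 : ℕ) (U : ℤ → Matrix (Fin 2) (Fin 2) ℂ) :
    Matrix (Fin (n0 + 1) × Fin 2) (Fin (n0 + 1) × Fin 2) ℂ :=
  Matrix.of fun p q =>
    (if p.2 = 0 ∧ (q.1 : ℕ) = (p.1 : ℕ) + 1 then U (((p.1 : ℕ) : ℤ) + 1) 0 q.2 else 0) +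
    (if p.2 = 1 ∧ (q.1 : ℕ) + 1 = (p.1 : ℕ) then U ((q.1 : ℕ) : ℤ) 1 q.2 else 0)

/-- `μ` is an eigenvalue of `𝒦` -/
def HasEig (n0 : ℕ) (U : ℤ → Matrix (Fin 2) (Fin 2) ℂ) (μ : ℂ) : Prop :=
  ∃ v : Fin (n0 + 1) × Fin 2 → ℂ, v ≠ 0 ∧ (Kmat n0 U).mulVec v = μ • v

/-- the algebraic multiplicity of `μ` as an eigenvalue of `𝒦`:
`dim ker (𝒦 - μI)^{2(n₀+1)}` -/
def algMult (n0 : ℕ) (U : ℤ → Matrix (Fin 2) (Fin 2) ℂ) (μ : ℂ) : ℕ :=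
  Module.finrank ℂ
    (LinearMap.ker (Matrix.mulVecLin ((Kmat n0 U - μ • 1) ^ (2 * (n0 + 1)))))

/-- `ψ` solves the generalized eigenvalue equation `𝒰ψ = μψ` (pointwise on `ℤ`) -/
def IsSol (U : ℤ → Matrix (Fin 2) (Fin 2) ℂ) (μ : ℂ) (ψ : ℤ → C2) : Prop :=
  ∀ n : ℤ, QWop U ψ n = μ • ψ n

/-- the local transfer matrix `T n ξ` -/
def Tmat (U : ℤ → Matrix (Fin 2) (Fin 2) ℂ) (ξ : ℂ) (n : ℤ) : Matrix (Fin 2) (Fin 2) ℂ :=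
  !![Complex.exp (Complex.I * ξ) / (starRingEnd ℂ) (U n 0 0),
      -((starRingEnd ℂ) (U n 1 0)) / (starRingEnd ℂ) (U n 0 0);
    -(U n 1 0) / U n 1 1, Complex.exp (-(Complex.I * ξ)) / U n 1 1]

/-- the global transfer matrix `𝕋(ξ) = T₀(ξ)T₁(ξ)⋯T_{n₀}(ξ)` -/
def TT (n0 : ℕ) (U : ℤ → Matrix (Fin 2) (Fin 2) ℂ) (ξ : ℂ) : Matrix (Fin 2) (Fin 2) ℂ :=
  ((List.range (n0 + 1)).map fun k => Tmat U ξ (k : ℤ)).prod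

/-- the Wronskian-type determinant `𝒲_n(ψ₁,ψ₂) = det(Π_nψ₁, Π_nψ₂)` where
`Π_nψ = (⟨L|ψ(n)⟩, ⟨R|ψ(n+1)⟩)ᵀ` -/
def Wr (ψ₁ ψ₂ : ℤ → C2) (n : ℤ) : ℂ :=
  ψ₁ n 0 * ψ₂ (n + 1) 1 - ψ₂ n 0 * ψ₁ (n + 1) 1

/-- outgoing state -/
def Outgoing (n0 : ℕ) (ψ : ℤ → C2) : Prop :=
  ∀ n : ℕ, ψ (-(n : ℤ)) 1 = 0 ∧ ψ ((n0 : ℤ) + n) 0 = 0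

/-- member of `ℋ^out_N` -/
def OutgoingFrom (n0 : ℕ) (N : ℕ) (ψ : ℤ → C2) : Prop :=
  ∀ n : ℕ, N ≤ n → ψ (-(n : ℤ)) 1 = 0 ∧ ψ ((n0 : ℤ) + n) 0 = 0

/-- incoming state -/
def Incoming (n0 : ℕ) (φ : ℤ → C2) : Prop :=
  ∀ n : ℕ, φ (-(n : ℤ)) 0 = 0 ∧ φ ((n0 : ℤ) + n) 1 = 0

/-- the pairing `⟨φ, ψ⟩ = Σ_{n∈ℤ} (φ(n), ψ(n))_{ℂ²}` -/
def pairing (φ ψ : ℤ → C2) : ℂ :=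
  ∑' n : ℤ, ∑ i : Fin 2, (starRingEnd ℂ) (φ n i) * ψ n i

/-- restriction of a state to `[n₀]` -/
def resK (n0 : ℕ) (ψ : ℤ → C2) : Fin (n0 + 1) × Fin 2 → ℂ :=
  fun p => ψ ((p.1 : ℕ) : ℤ) p.2

/-- the Jost solution `ψ_out^-(·;ξ)`: solution equal to `e^{-inξ}|L⟩` for `n ≤ -1` -/
def JostOutMinus (U : ℤ → Matrix (Fin 2) (Fin 2) ℂ) (ξ : ℂ) (ψ : ℤ → C2) : Prop :=
  IsSol U (Complex.exp (-(Complex.I * ξ))) ψ ∧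
    ∀ n : ℤ, n ≤ -1 → ψ n = ![Complex.exp (-(Complex.I * (n : ℂ) * ξ)), 0]

/-- the Jost solution `ψ_out^+(·;ξ)`: solution equal to `e^{inξ}|R⟩` for `n ≥ n₀+1` -/
def JostOutPlus (n0 : ℕ) (U : ℤ → Matrix (Fin 2) (Fin 2) ℂ) (ξ : ℂ) (ψ : ℤ → C2) : Prop :=
  IsSol U (Complex.exp (-(Complex.I * ξ))) ψ ∧
    ∀ n : ℤ, (n0 : ℤ) + 1 ≤ n → ψ n = ![0, Complex.exp (Complex.I * (n : ℂ) * ξ)]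

/-- the Jost solution `ψ_in^-(·;ξ)`: solution equal to `e^{inξ}|R⟩` for `n ≤ -1` -/
def JostInMinus (U : ℤ → Matrix (Fin 2) (Fin 2) ℂ) (ξ : ℂ) (ψ : ℤ → C2) : Prop :=
  IsSol U (Complex.exp (-(Complex.I * ξ))) ψ ∧
    ∀ n : ℤ, n ≤ -1 → ψ n = ![0, Complex.exp (Complex.I * (n : ℂ) * ξ)]

/-- the Jost solution `ψ_in^+(·;ξ)`: solution equal to `e^{-inξ}|L⟩` for `n ≥ n₀+1` -/
def JostInPlus (n0 : ℕ) (U : ℤ → Matrix (Fin 2) (Fin 2) ℂ) (ξ : ℂ) (ψ : ℤ → C2) : Prop :=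
  IsSol U (Complex.exp (-(Complex.I * ξ))) ψ ∧
    ∀ n : ℤ, (n0 : ℤ) + 1 ≤ n → ψ n = ![Complex.exp (-(Complex.I * (n : ℂ) * ξ)), 0]

lemma sum_fin_eq {N : ℕ} (k : ℕ) (f : Fin N → ℂ) :
    ∑ m : Fin N, (if (m : ℕ) = k then f m else 0) = if h : k < N then f ⟨k, h⟩ else 0 := by
  split
  case isTrue h =>
    rw [Finset.sum_eq_single ⟨k, h⟩]
    · rw [if_pos rfl]
    · intro m _ hm
      exact if_neg (fun hPm => hm (Fin.ext hPm))
    · intro hm; exact absurd (Finset.mem_univ _) hm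
  case isFalse h =>
    apply Finset.sum_eq_zero
    intro m _
    exact if_neg (fun hPm => h (by rw [← hPm]; exact m.isLt))



lemma Kapply0 (n0 : ℕ) (U : ℤ → Matrix (Fin 2) (Fin 2) ℂ) (v : Fin (n0 + 1) × Fin 2 → ℂ)
    (n : Fin (n0 + 1)) :
    (Kmat n0 U).mulVec v (n, 0) =
      if h : (n : ℕ) + 1 < n0 + 1 then
        U (((n : ℕ) : ℤ) + 1) 0 0 * v (⟨(n : ℕ) + 1, h⟩, 0) +
          U (((n : ℕ) : ℤ) + 1) 0 1 * v (⟨(n : ℕ) + 1, h⟩, 1)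
      else 0 := by
  have step : (Kmat n0 U).mulVec v (n, 0) =
      ∑ m : Fin (n0 + 1), (if (m : ℕ) = (n : ℕ) + 1 then
        U (((n : ℕ) : ℤ) + 1) 0 0 * v (m, 0) + U (((n : ℕ) : ℤ) + 1) 0 1 * v (m, 1) else 0) := by
    unfold Matrix.mulVec dotProduct Kmat
    rw [Fintype.sum_prod_type]
    refine Finset.sum_congr rfl fun m _ => ?_
    rw [Fin.sum_univ_two]
    simp only [Matrix.of_apply]
    by_cases hm : (m : ℕ) = (n : ℕ) + 1
    · simp [hm, (by decide : ¬ ((0:Fin 2) = 1))]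
    · simp [hm]
  rw [step, sum_fin_eq]



lemma Kapply1 (n0 : ℕ) (U : ℤ → Matrix (Fin 2) (Fin 2) ℂ) (v : Fin (n0 + 1) × Fin 2 → ℂ)
    (n : Fin (n0 + 1)) (k : ℕ) (hk : k + 1 = (n : ℕ)) :
    (Kmat n0 U).mulVec v (n, 1) =
      U ((k : ℕ) : ℤ) 1 0 * v (⟨k, by omega⟩, 0) + U ((k : ℕ) : ℤ) 1 1 * v (⟨k, by omega⟩, 1) := by
  have step : (Kmat n0 U).mulVec v (n, 1) =
      ∑ m : Fin (n0 + 1), (if (m : ℕ) = k then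
        U ((k : ℕ) : ℤ) 1 0 * v (m, 0) + U ((k : ℕ) : ℤ) 1 1 * v (m, 1) else 0) := by
    unfold Matrix.mulVec dotProduct Kmat
    rw [Fintype.sum_prod_type]
    refine Finset.sum_congr rfl fun m _ => ?_
    rw [Fin.sum_univ_two]
    simp only [Matrix.of_apply]
    by_cases hm : (m : ℕ) = k
    · have h2 : (m : ℕ) + 1 = (n : ℕ) := by omega
      simp [hm, h2, hk, (by decide : ¬ ((1:Fin 2) = 0))]
    · have h2 : ¬ ((m : ℕ) + 1 = (n : ℕ)) := by omega
      simp [hm, h2, (by decide : ¬ ((1:Fin 2) = 0))]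
  rw [step, sum_fin_eq, dif_pos (by omega : k < n0 + 1)]



lemma Kapply1' (n0 : ℕ) (U : ℤ → Matrix (Fin 2) (Fin 2) ℂ) (v : Fin (n0 + 1) × Fin 2 → ℂ)
    (n : Fin (n0 + 1)) (hn : (n : ℕ) = 0) :
    (Kmat n0 U).mulVec v (n, 1) = 0 := by
  unfold Matrix.mulVec dotProduct Kmat
  rw [Fintype.sum_prod_type]
  apply Finset.sum_eq_zero
  intro m _
  apply Finset.sum_eq_zero
  intro j _
  simp only [Matrix.of_apply]
  have h2 : ¬ ((m : ℕ) + 1 = (n : ℕ)) := by omega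
  simp [h2, (by decide : ¬ ((1:Fin 2) = 0))]


lemma uent (U : Matrix (Fin 2) (Fin 2) ℂ) (h : U ∈ Matrix.unitaryGroup (Fin 2) ℂ) :
    ((starRingEnd ℂ) (U 0 0) * U 0 0 + (starRingEnd ℂ) (U 1 0) * U 1 0 = 1) ∧
    ((starRingEnd ℂ) (U 0 1) * U 0 1 + (starRingEnd ℂ) (U 1 1) * U 1 1 = 1) ∧
    ((starRingEnd ℂ) (U 0 0) * U 0 1 + (starRingEnd ℂ) (U 1 0) * U 1 1 = 0) ∧
    ((starRingEnd ℂ) (U 0 1) * U 0 0 + (starRingEnd ℂ) (U 1 1) * U 1 0 = 0) ∧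
    (U 1 0 * (starRingEnd ℂ) (U 1 0) + U 1 1 * (starRingEnd ℂ) (U 1 1) = 1) := by
  have e1 : (star U * U) 0 0 = (1 : Matrix (Fin 2) (Fin 2) ℂ) 0 0 := by rw [h.1]
  have e2 : (star U * U) 1 1 = (1 : Matrix (Fin 2) (Fin 2) ℂ) 1 1 := by rw [h.1]
  have e3 : (star U * U) 0 1 = (1 : Matrix (Fin 2) (Fin 2) ℂ) 0 1 := by rw [h.1]
  have e4 : (star U * U) 1 0 = (1 : Matrix (Fin 2) (Fin 2) ℂ) 1 0 := by rw [h.1]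
  have e5 : (U * star U) 1 1 = (1 : Matrix (Fin 2) (Fin 2) ℂ) 1 1 := by rw [h.2]
  simp [Matrix.mul_apply, Fin.sum_univ_two, Matrix.star_apply, Matrix.one_apply] at e1 e2 e3 e4 e5
  exact ⟨e1, e2, e3, e4, e5⟩



lemma dne (U : Matrix (Fin 2) (Fin 2) ℂ) (h : U ∈ Matrix.unitaryGroup (Fin 2) ℂ)
    (ha : U 0 0 ≠ 0) : U 1 1 ≠ 0 := by
  obtain ⟨e1, -, -, -, e5⟩ := uent U h
  intro hd
  rw [hd] at e5
  have : (starRingEnd ℂ) (U 1 0) * U 1 0 = 1 := by linear_combination e5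
  have : (starRingEnd ℂ) (U 0 0) * U 0 0 = 0 := by linear_combination e1 - this
  rcases mul_eq_zero.1 this with h' | h'
  · exact ha ((map_eq_zero (starRingEnd ℂ)).1 h')
  · exact ha h'



lemma site_parseval (U : Matrix (Fin 2) (Fin 2) ℂ) (h : U ∈ Matrix.unitaryGroup (Fin 2) ℂ)
    (x0 x1 : ℂ) :
    Complex.normSq (U 0 0 * x0 + U 0 1 * x1) + Complex.normSq (U 1 0 * x0 + U 1 1 * x1) =
      Complex.normSq x0 + Complex.normSq x1 := by
  obtain ⟨e1, e2, e3, e4, -⟩ := uent U h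
  have key : (U 0 0 * x0 + U 0 1 * x1) * (starRingEnd ℂ) (U 0 0 * x0 + U 0 1 * x1) +
      (U 1 0 * x0 + U 1 1 * x1) * (starRingEnd ℂ) (U 1 0 * x0 + U 1 1 * x1) =
      x0 * (starRingEnd ℂ) x0 + x1 * (starRingEnd ℂ) x1 := by
    simp only [map_add, _root_.map_mul]
    linear_combination (x0 * (starRingEnd ℂ) x0) * e1 + (x1 * (starRingEnd ℂ) x1) * e2 +
      ((starRingEnd ℂ) x0 * x1) * e3 + (x0 * (starRingEnd ℂ) x1) * e4
  rw [Complex.mul_conj, Complex.mul_conj, Complex.mul_conj, Complex.mul_conj] at key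
  exact_mod_cast key


lemma part1 (n0 : ℕ) (U : ℤ → Matrix (Fin 2) (Fin 2) ℂ)
    (hU : CoinsUnitary U) (hA2 : A2 U) :
    ∀ μ : ℂ, μ ≠ 0 → HasEig n0 U μ → ‖μ‖ < 1 := by
  intro μ hμ ⟨v, hv, hK⟩
  have hKp : ∀ p, (Kmat n0 U).mulVec v p = μ * v p := by
    intro p; rw [hK]; simp
  set vv : ℕ → Fin 2 → ℂ := fun k j => if h : k < n0 + 1 then v (⟨k, h⟩, j) else 0 with hvvdef
  have hvv : ∀ (k : ℕ) (h : k < n0 + 1) (j : Fin 2), v (⟨k, h⟩, j) = vv k j := by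
    intro k h j; simp only [hvvdef]; rw [dif_pos h]
  -- eigen equations
  have hE0 : ∀ k, k < n0 →
      U ((k : ℤ) + 1) 0 0 * vv (k + 1) 0 + U ((k : ℤ) + 1) 0 1 * vv (k + 1) 1 = μ * vv k 0 := by
    intro k hk
    have h1 : k < n0 + 1 := by omega
    have t := hKp (⟨k, h1⟩, 0)
    rw [Kapply0] at t
    rw [dif_pos (show ((⟨k, h1⟩ : Fin (n0 + 1)) : ℕ) + 1 < n0 + 1 by exact Nat.add_lt_add_right hk 1)] at t
    rw [hvv, hvv, hvv] at t
    exact t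
  have hEtop : vv n0 0 = 0 := by
    have t := hKp (⟨n0, by omega⟩, 0)
    rw [Kapply0] at t
    rw [dif_neg (show ¬ (((⟨n0, by omega⟩ : Fin (n0 + 1)) : ℕ) + 1 < n0 + 1) by exact fun hh => Nat.lt_irrefl _ hh)] at t
    rw [hvv] at t
    exact (mul_eq_zero.1 t.symm).resolve_left hμ
  have hE1 : ∀ k, k < n0 →
      U (k : ℤ) 1 0 * vv k 0 + U (k : ℤ) 1 1 * vv k 1 = μ * vv (k + 1) 1 := by
    intro k hk
    have h2 : k + 1 < n0 + 1 := by omega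
    have t := hKp (⟨k + 1, h2⟩, 1)
    rw [Kapply1 n0 U v _ k rfl] at t
    rw [hvv, hvv, hvv] at t
    exact t
  have hEbot : vv 0 1 = 0 := by
    have t := hKp (⟨0, by omega⟩, 1)
    rw [Kapply1' n0 U v _ rfl] at t
    rw [hvv] at t
    exact (mul_eq_zero.1 t.symm).resolve_left hμ
  -- row sums
  set r : ℕ → ℂ := fun k => U (k : ℤ) 0 0 * vv k 0 + U (k : ℤ) 0 1 * vv k 1 with hr
  set s : ℕ → ℂ := fun k => U (k : ℤ) 1 0 * vv k 0 + U (k : ℤ) 1 1 * vv k 1 with hs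
  have hE0' : ∀ k, k < n0 → r (k + 1) = μ * vv k 0 := by
    intro k hk
    have := hE0 k hk
    rw [hr]
    simp only
    push_cast
    exact this
  have hE1' : ∀ k, k < n0 → s k = μ * vv (k + 1) 1 := by
    intro k hk
    exact hE1 k hk
  set S : ℝ := ∑ k ∈ Finset.range (n0 + 1), (Complex.normSq (vv k 0) + Complex.normSq (vv k 1))
    with hS
  have hSpos : 0 < S := by
    have hvp : ∃ p, v p ≠ 0 := by
      by_contra h
      push_neg at h
      exact hv (funext h)
    obtain ⟨⟨m, j⟩, hp⟩ := hvp
    have hpv : vv (m : ℕ) j ≠ 0 := by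
      rw [← hvv (m : ℕ) m.isLt j]
      exact hp
    have h1 : Complex.normSq (vv (m : ℕ) j) ≤
        Complex.normSq (vv (m : ℕ) 0) + Complex.normSq (vv (m : ℕ) 1) := by
      fin_cases j
      · simpa using Complex.normSq_nonneg (vv (m : ℕ) 1)
      · simpa using Complex.normSq_nonneg (vv (m : ℕ) 0)
    have h2 : Complex.normSq (vv (m : ℕ) 0) + Complex.normSq (vv (m : ℕ) 1) ≤ S := by
      rw [hS]
      refine Finset.single_le_sum (f := fun k => Complex.normSq (vv k 0) + Complex.normSq (vv k 1))
        (fun i _ => add_nonneg (Complex.normSq_nonneg _) (Complex.normSq_nonneg _)) ?_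
      exact Finset.mem_range.2 m.isLt
    have h0 : 0 < Complex.normSq (vv (m : ℕ) j) := Complex.normSq_pos.2 hpv
    linarith
  -- Parseval
  have hpar : S = ∑ k ∈ Finset.range (n0 + 1), (Complex.normSq (r k) + Complex.normSq (s k)) := by
    rw [hS]
    refine Finset.sum_congr rfl fun k _ => ?_
    exact (site_parseval (U (k : ℤ)) (hU _) (vv k 0) (vv k 1)).symm
  -- split sums
  have hrsum : ∑ k ∈ Finset.range (n0 + 1), Complex.normSq (r k) =
      Complex.normSq (r 0) + Complex.normSq μ * ∑ k ∈ Finset.range n0, Complex.normSq (vv k 0) := by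
    rw [Finset.sum_range_succ']
    rw [add_comm, Finset.mul_sum]
    congr 1
    refine Finset.sum_congr rfl fun k hk => ?_
    rw [hE0' k (Finset.mem_range.1 hk), Complex.normSq_mul]
  have hssum : ∑ k ∈ Finset.range (n0 + 1), Complex.normSq (s k) =
      Complex.normSq (s n0) + Complex.normSq μ * ∑ k ∈ Finset.range n0, Complex.normSq (vv (k + 1) 1) := by
    rw [Finset.sum_range_succ]
    rw [add_comm, Finset.mul_sum]
    congr 1
    refine Finset.sum_congr rfl fun k hk => ?_
    rw [hE1' k (Finset.mem_range.1 hk), Complex.normSq_mul]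
  have hv0sum : ∑ k ∈ Finset.range (n0 + 1), Complex.normSq (vv k 0) =
      ∑ k ∈ Finset.range n0, Complex.normSq (vv k 0) := by
    rw [Finset.sum_range_succ, hEtop]
    simp
  have hv1sum : ∑ k ∈ Finset.range (n0 + 1), Complex.normSq (vv k 1) =
      ∑ k ∈ Finset.range n0, Complex.normSq (vv (k + 1) 1) := by
    rw [Finset.sum_range_succ', hEbot]
    simp
  have hkey : S = Complex.normSq (r 0) + Complex.normSq (s n0) + Complex.normSq μ * S := by
    calc S = ∑ k ∈ Finset.range (n0 + 1), Complex.normSq (r k) +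
              ∑ k ∈ Finset.range (n0 + 1), Complex.normSq (s k) := by
              rw [hpar, Finset.sum_add_distrib]
      _ = Complex.normSq (r 0) + Complex.normSq (s n0) + Complex.normSq μ *
            (∑ k ∈ Finset.range n0, Complex.normSq (vv k 0) +
             ∑ k ∈ Finset.range n0, Complex.normSq (vv (k + 1) 1)) := by
              rw [hrsum, hssum]; ring
      _ = Complex.normSq (r 0) + Complex.normSq (s n0) + Complex.normSq μ * S := by
              rw [hS, Finset.sum_add_distrib, hv0sum, hv1sum]
  -- conclude
  have hns : Complex.normSq μ < 1 := by
    rcases lt_or_ge (Complex.normSq μ) 1 with h | h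
    · exact h
    exfalso
    have hb0 : 0 ≤ Complex.normSq (r 0) := Complex.normSq_nonneg _
    have hb1 : 0 ≤ Complex.normSq (s n0) := Complex.normSq_nonneg _
    have hle : Complex.normSq μ = 1 := by nlinarith
    have hr0 : r 0 = 0 := by
      have : Complex.normSq (r 0) = 0 := by nlinarith
      exact Complex.normSq_eq_zero.1 this
    have hzero : ∀ k, vv k 0 = 0 ∧ vv k 1 = 0 := by
      intro k
      induction k with
      | zero =>
        refine ⟨?_, hEbot⟩
        rw [hr] at hr0
        simp only at hr0
        rw [hEbot, mul_zero, add_zero] at hr0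
        exact (mul_eq_zero.1 hr0).resolve_left (hA2 _)
      | succ k ih =>
        rcases lt_or_ge k n0 with hkn | hkn
        · obtain ⟨ih0, ih1⟩ := ih
          have h1 : vv (k + 1) 1 = 0 := by
            have := hE1 k hkn
            rw [ih0, ih1, mul_zero, mul_zero, add_zero] at this
            exact (mul_eq_zero.1 this.symm).resolve_left hμ
          have h0 : vv (k + 1) 0 = 0 := by
            have := hE0 k hkn
            rw [ih0, mul_zero, h1, mul_zero, add_zero] at this
            exact (mul_eq_zero.1 this).resolve_left (hA2 _)
          exact ⟨h0, h1⟩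
        · constructor <;> · simp only [hvvdef]; rw [dif_neg (by omega)]
    apply hv
    funext p
    obtain ⟨m, j⟩ := p
    have : v (m, j) = vv (m : ℕ) j := hvv (m : ℕ) m.isLt j
    rw [this]
    fin_cases j
    · exact (hzero (m : ℕ)).1
    · exact (hzero (m : ℕ)).2
  nlinarith [norm_nonneg μ, Complex.sq_norm μ]


lemma Tmat_mulVec0 (U : ℤ → Matrix (Fin 2) (Fin 2) ℂ) (ξ : ℂ) (n : ℤ) (x : Fin 2 → ℂ) :
    (Tmat U ξ n).mulVec x 0 =
      Complex.exp (Complex.I * ξ) / (starRingEnd ℂ) (U n 0 0) * x 0 +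
        -((starRingEnd ℂ) (U n 1 0)) / (starRingEnd ℂ) (U n 0 0) * x 1 := by
  simp [Tmat, Matrix.mulVec, dotProduct, Fin.sum_univ_two, Matrix.vecHead, Matrix.vecTail]

lemma Tmat_mulVec1 (U : ℤ → Matrix (Fin 2) (Fin 2) ℂ) (ξ : ℂ) (n : ℤ) (x : Fin 2 → ℂ) :
    (Tmat U ξ n).mulVec x 1 =
      -(U n 1 0) / U n 1 1 * x 0 + Complex.exp (-(Complex.I * ξ)) / U n 1 1 * x 1 := by
  simp [Tmat, Matrix.mulVec, dotProduct, Fin.sum_univ_two, Matrix.vecHead, Matrix.vecTail]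

lemma part2 (n0 : ℕ) (U : ℤ → Matrix (Fin 2) (Fin 2) ℂ)
    (hU : CoinsUnitary U) (hA2 : A2 U) :
    ∀ ξ : ℂ, 0 ≤ ξ.im → TT n0 U ξ 1 1 ≠ 0 := by
  intro ξ hξ hTT
  set μ : ℂ := Complex.exp (-(Complex.I * ξ)) with hμdef
  have hμ : μ ≠ 0 := Complex.exp_ne_zero _
  have habs : 1 ≤ ‖μ‖ := by
    rw [hμdef, Complex.norm_exp]
    have hre : (-(Complex.I * ξ)).re = ξ.im := by simp [Complex.mul_re]
    rw [hre]
    calc (1 : ℝ) = Real.exp 0 := Real.exp_zero.symm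
      _ ≤ Real.exp ξ.im := Real.exp_le_exp.2 hξ
  have hx : μ * Complex.exp (Complex.I * ξ) = 1 := by
    rw [hμdef, ← Complex.exp_add]
    simp
  -- the backward recursion
  set F : ℕ → (Fin 2 → ℂ) := fun k =>
    (((List.range (n0 + 1 - k)).map fun i => Tmat U ξ ((k + i : ℕ) : ℤ)).prod).mulVec ![0, 1]
    with hFdef
  have hFtop : F (n0 + 1) = ![0, 1] := by
    simp only [hFdef, Nat.sub_self, List.range_zero, List.map_nil, List.prod_nil,
      Matrix.one_mulVec]
  have hFrec : ∀ k, k ≤ n0 → F k = (Tmat U ξ ((k : ℕ) : ℤ)).mulVec (F (k + 1)) := by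
    intro k hk
    have h1 : n0 + 1 - k = (n0 - k) + 1 := by omega
    have h2 : n0 + 1 - (k + 1) = n0 - k := by omega
    have hf : ((fun i => Tmat U ξ ((k + i : ℕ) : ℤ)) ∘ Nat.succ) =
        (fun i => Tmat U ξ ((k + 1 + i : ℕ) : ℤ)) := by
      funext i
      simp only [Function.comp]
      congr 1
      push_cast
      ring
    simp only [hFdef, h1, h2]
    rw [Matrix.mulVec_mulVec]
    rw [List.range_succ_eq_map, List.map_cons, List.map_map, List.prod_cons, hf]
    norm_num
  have hF0 : F 0 1 = TT n0 U ξ 1 1 := by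
    have hTTeq : TT n0 U ξ =
        (((List.range (n0 + 1)).map fun i : ℕ => Tmat U ξ ((0 + i : ℕ) : ℤ)).prod) := by
      unfold TT
      congr 1
      have hlist : ∀ l : List ℕ, (l.flatMap fun a : ℕ => [(a : ℤ)]) =
          l.map (fun a : ℕ => (a : ℤ)) := by
        intro l
        induction l with
        | nil => rfl
        | cons x xs ih => simp [ih]
      simp only [List.pure_def, List.bind_eq_flatMap, hlist, List.map_map]
      simp [Function.comp]
    have hgen : ∀ M : Matrix (Fin 2) (Fin 2) ℂ, (M.mulVec ![0, 1]) 1 = M 1 1 := by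
      intro M
      simp [Matrix.mulVec, dotProduct, Fin.sum_univ_two, Matrix.vecHead, Matrix.vecTail]
    simp only [hFdef, Nat.sub_zero]
    rw [← hTTeq]
    exact hgen _
  -- the eigenvector
  set v : Fin (n0 + 1) × Fin 2 → ℂ := fun p =>
    if p.2 = 0 then F ((p.1 : ℕ) + 1) 0 else F (p.1 : ℕ) 1 with hvdef
  have hv0 : ∀ (m : Fin (n0 + 1)), v (m, 0) = F ((m : ℕ) + 1) 0 := fun m => rfl
  have hv1 : ∀ (m : Fin (n0 + 1)), v (m, 1) = F (m : ℕ) 1 := fun m => rfl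
  -- nontriviality
  have hd : ∀ n : ℤ, U n 1 1 ≠ 0 := fun n => dne (U n) (hU n) (hA2 n)
  have hFn0 : F n0 1 = μ / U (n0 : ℤ) 1 1 := by
    rw [hFrec n0 le_rfl, Tmat_mulVec1, hFtop]
    simp [hμdef]
  have hvne : v ≠ 0 := by
    intro h0
    have h1 : v (⟨n0, by omega⟩, 1) = 0 := by rw [h0]; rfl
    rw [hv1, hFn0] at h1
    rw [div_eq_zero_iff] at h1
    exact hμ (h1.resolve_right (hd _))
  -- eigen equation
  have hKv : (Kmat n0 U).mulVec v = μ • v := by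
    funext p
    obtain ⟨n, j⟩ := p
    fin_cases j
    · show (Kmat n0 U).mulVec v (n, 0) = μ * v (n, 0)
      rw [Kapply0]
      split
      case isTrue h =>
        set k : ℕ := (n : ℕ) + 1 with hkd
        have hk : k ≤ n0 := by omega
        have e0 := congrFun (hFrec k hk) 0
        have e1 := congrFun (hFrec k hk) 1
        rw [Tmat_mulVec0] at e0
        rw [Tmat_mulVec1] at e1
        rw [hv0, hv1, hv0]
        show U (((n : ℕ) : ℤ) + 1) 0 0 * F (k + 1) 0 + U (((n : ℕ) : ℤ) + 1) 0 1 * F k 1 =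
          μ * F k 0
        have hcast : ((k : ℕ) : ℤ) = ((n : ℕ) : ℤ) + 1 := by push_cast [hkd]; ring
        rw [← hcast]
        obtain ⟨h00, -, h01, -, -⟩ := uent (U ((k : ℕ) : ℤ)) (hU _)
        have ha := hA2 ((k : ℕ) : ℤ)
        have ha' : (starRingEnd ℂ) (U ((k : ℕ) : ℤ) 0 0) ≠ 0 := by
          simpa using ha
        have hdk := hd ((k : ℕ) : ℤ)
        have e0' : (starRingEnd ℂ) (U ((k : ℕ) : ℤ) 0 0) * F k 0 =
            Complex.exp (Complex.I * ξ) * F (k + 1) 0 -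
              (starRingEnd ℂ) (U ((k : ℕ) : ℤ) 1 0) * F (k + 1) 1 := by
          rw [e0]
          field_simp
          ring
        have e1' : U ((k : ℕ) : ℤ) 1 1 * F k 1 =
            -(U ((k : ℕ) : ℤ) 1 0) * F (k + 1) 0 + μ * F (k + 1) 1 := by
          rw [e1]
          field_simp
          ring
        refine mul_left_cancel₀
          (mul_ne_zero ha' hdk :
            (starRingEnd ℂ) (U ((k : ℕ) : ℤ) 0 0) * U ((k : ℕ) : ℤ) 1 1 ≠ 0) ?_
        linear_combination ((starRingEnd ℂ) (U ((k : ℕ) : ℤ) 0 0) * U ((k : ℕ) : ℤ) 0 1) * e1' +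
          (-(U ((k : ℕ) : ℤ) 1 1 * μ)) * e0' +
          (-(U ((k : ℕ) : ℤ) 1 1 * F (k + 1) 0)) * hx +
          (μ * F (k + 1) 1 - U ((k : ℕ) : ℤ) 1 0 * F (k + 1) 0) * h01 +
          (U ((k : ℕ) : ℤ) 1 1 * F (k + 1) 0) * h00
      case isFalse h =>
        have hn : (n : ℕ) = n0 := by omega
        rw [hv0, hn, hFtop]
        simp
    · show (Kmat n0 U).mulVec v (n, 1) = μ * v (n, 1)
      by_cases hn : (n : ℕ) = 0
      · rw [Kapply1' n0 U v _ hn, hv1, hn, hF0, hTT]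
        simp
      · have hk : ((n : ℕ) - 1) + 1 = (n : ℕ) := by omega
        rw [Kapply1 n0 U v _ ((n : ℕ) - 1) hk]
        set k : ℕ := (n : ℕ) - 1 with hkd
        have hkle : k ≤ n0 := by omega
        have e1 := congrFun (hFrec k hkle) 1
        rw [Tmat_mulVec1] at e1
        rw [hv0, hv1, hv1]
        show U ((k : ℕ) : ℤ) 1 0 * F (k + 1) 0 + U ((k : ℕ) : ℤ) 1 1 * F k 1 = μ * F (n : ℕ) 1
        have hnk : (n : ℕ) = k + 1 := by omega
        have hdk := hd ((k : ℕ) : ℤ)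
        have e1' : U ((k : ℕ) : ℤ) 1 1 * F k 1 =
            -(U ((k : ℕ) : ℤ) 1 0) * F (k + 1) 0 + μ * F (k + 1) 1 := by
          rw [e1]
          field_simp
          ring
        rw [hnk]
        linear_combination e1'
  exact absurd (part1 n0 U hU hA2 μ hμ ⟨v, hvne, hKv⟩) (by linarith)


/-- nonzero eigenvalues of `𝒦` have modulus `< 1`; equivalently
`𝕋₂₂(ξ) ≠ 0` whenever `Im ξ ≥ 0`. -/
theorem stmt_6 (n0 : ℕ) (U : ℤ → Matrix (Fin 2) (Fin 2) ℂ)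
    (hU : CoinsUnitary U) (hA1 : A1 n0 U) (hA2 : A2 U) :
    (∀ μ : ℂ, μ ≠ 0 → HasEig n0 U μ → ‖μ‖ < 1) ∧
    ∀ ξ : ℂ, 0 ≤ ξ.im → TT n0 U ξ 1 1 ≠ 0 := by
  exact ⟨part1 n0 U hU hA2, part2 n0 U hU hA2⟩
end
end

section
/- Assume (A1) and (A2). For every ξ ∈ ℂ, the following are equivalent: (i) there exists a nonzero outgoing solution ψ : ℤ → ℂ² of 𝒰ψ = e^{−iξ}ψ; (ii) e^{−iξ} is a (necessarily nonzero) eigenvalue of 𝒦; (iii) 𝕋₂₂(ξ) = 0. -/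
open Complex Matrix

noncomputable section

/-! ### Auxiliary development -/

section AuxQW

variable {U : ℤ → Matrix (Fin 2) (Fin 2) ℂ} {μ ξ : ℂ} {ψ : ℤ → C2}

lemma isSol_iff :
    IsSol U μ ψ ↔ ∀ n : ℤ,
      (U (n+1) 0 0 * ψ (n+1) 0 + U (n+1) 0 1 * ψ (n+1) 1 = μ * ψ n 0) ∧
      (U (n-1) 1 0 * ψ (n-1) 0 + U (n-1) 1 1 * ψ (n-1) 1 = μ * ψ n 1) := by
  unfold IsSol QWop Pmat Qmat
  refine forall_congr' fun n => ?_
  rw [funext_iff, Fin.forall_fin_two]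
  simp [Matrix.mulVec, dotProduct, Fin.sum_univ_two, Pi.smul_apply, smul_eq_mul]

lemma coin_h1 (hU : CoinsUnitary U) (n : ℤ) :
    (starRingEnd ℂ) (U n 0 0) * U n 0 0 + (starRingEnd ℂ) (U n 1 0) * U n 1 0 = 1 := by
  have h := Matrix.mem_unitaryGroup_iff'.mp (hU n)
  have := congrFun (congrFun h 0) 0
  simpa [Matrix.mul_apply, Fin.sum_univ_two, Matrix.one_apply, Matrix.star_apply] using this

lemma coin_h2 (hU : CoinsUnitary U) (n : ℤ) :
    (starRingEnd ℂ) (U n 0 0) * U n 0 1 + (starRingEnd ℂ) (U n 1 0) * U n 1 1 = 0 := by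
  have h := Matrix.mem_unitaryGroup_iff'.mp (hU n)
  have := congrFun (congrFun h 0) 1
  simpa [Matrix.mul_apply, Fin.sum_univ_two, Matrix.one_apply, Matrix.star_apply] using this

lemma coin_h3 (hU : CoinsUnitary U) (n : ℤ) :
    (starRingEnd ℂ) (U n 0 1) * U n 0 1 + (starRingEnd ℂ) (U n 1 1) * U n 1 1 = 1 := by
  have h := Matrix.mem_unitaryGroup_iff'.mp (hU n)
  have := congrFun (congrFun h 1) 1
  simpa [Matrix.mul_apply, Fin.sum_univ_two, Matrix.one_apply, Matrix.star_apply] using this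

lemma coin_d_ne (hU : CoinsUnitary U) (hA2 : A2 U) (n : ℤ) : U n 1 1 ≠ 0 := by
  intro hd
  have h2 := coin_h2 hU n
  have h3 := coin_h3 hU n
  rw [hd] at h2 h3
  have hb : U n 0 1 = 0 := by
    have ha : (starRingEnd ℂ) (U n 0 0) ≠ 0 := by
      simpa using hA2 n
    field_simp at h2
    rw [mul_zero, add_zero] at h2
    exact (mul_eq_zero.mp h2).resolve_left ha
  rw [hb] at h3
  simp at h3

lemma muE_one : Complex.exp (-(Complex.I * ξ)) * Complex.exp (Complex.I * ξ) = 1 := by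
  rw [← Complex.exp_add, neg_add_cancel, Complex.exp_zero]

lemma mu_ne_zero : Complex.exp (-(Complex.I * ξ)) ≠ 0 := Complex.exp_ne_zero _

lemma step_scalar (a b c d μ E x0 x1 p q : ℂ)
    (hμE : μ * E = 1)
    (h1 : (starRingEnd ℂ) a * a + (starRingEnd ℂ) c * c = 1)
    (h2 : (starRingEnd ℂ) a * b + (starRingEnd ℂ) c * d = 0)
    (ha : a ≠ 0) (hd : d ≠ 0) :
    ((a * x0 + b * x1 = μ * p) ∧ (c * x0 + d * x1 = μ * q)) ↔
    ((p = E / (starRingEnd ℂ) a * x0 + (-(starRingEnd ℂ) c) / (starRingEnd ℂ) a * q) ∧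
      (x1 = (-c) / d * x0 + μ / d * q)) := by
  have ha' : (starRingEnd ℂ) a ≠ 0 := by simpa using ha
  have hμ : μ ≠ 0 := left_ne_zero_of_mul_eq_one hμE
  constructor
  · rintro ⟨A1, A2⟩
    constructor
    · field_simp
      have key : μ * (d * (p * (starRingEnd ℂ) a - E * x0 + (starRingEnd ℂ) c * q)) = 0 := by
        linear_combination (-(d * (starRingEnd ℂ) a)) * A1 + ((starRingEnd ℂ) a * b) * A2 +
          (d * x0) * h1 + (μ*q - c*x0) * h2 + (-(d * x0)) * hμE
      have key2 := (mul_eq_zero.mp key).resolve_left hμ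
      have key3 := (mul_eq_zero.mp key2).resolve_left hd
      linear_combination key3
    · field_simp
      linear_combination A2
  · rintro ⟨hp, hx1⟩
    constructor
    · rw [hp, hx1]
      field_simp
      linear_combination ((d*x0) * h1 + (μ*q - c*x0) * h2 + (-(d*x0)) * hμE)
    · rw [hx1]
      field_simp
      ring

/-- `Π_n ψ = (⟨L|ψ(n)⟩, ⟨R|ψ(n+1)⟩)ᵀ` -/
def Pivec (ψ : ℤ → C2) (n : ℤ) : C2 := ![ψ n 0, ψ (n + 1) 1]

lemma Tmat_mulVec (n : ℤ) (w : C2) :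
    (Tmat U ξ n).mulVec w =
      ![Complex.exp (Complex.I * ξ) / (starRingEnd ℂ) (U n 0 0) * w 0 +
          (-(starRingEnd ℂ) (U n 1 0)) / (starRingEnd ℂ) (U n 0 0) * w 1,
        (-(U n 1 0)) / U n 1 1 * w 0 + Complex.exp (-(Complex.I * ξ)) / U n 1 1 * w 1] := by
  funext i
  fin_cases i <;>
    simp [Tmat, Matrix.mulVec, dotProduct, Fin.sum_univ_two]

lemma step_iff (hU : CoinsUnitary U) (hA2 : A2 U) (ξ : ℂ) (ψ : ℤ → C2) (n : ℤ) :
    ((U n 0 0 * ψ n 0 + U n 0 1 * ψ n 1 = Complex.exp (-(Complex.I * ξ)) * ψ (n-1) 0) ∧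
     (U n 1 0 * ψ n 0 + U n 1 1 * ψ n 1 = Complex.exp (-(Complex.I * ξ)) * ψ (n+1) 1)) ↔
    Pivec ψ (n-1) = (Tmat U ξ n).mulVec (Pivec ψ n) := by
  rw [step_scalar (U n 0 0) (U n 0 1) (U n 1 0) (U n 1 1)
      (Complex.exp (-(Complex.I * ξ))) (Complex.exp (Complex.I * ξ))
      (ψ n 0) (ψ n 1) (ψ (n-1) 0) (ψ (n+1) 1) muE_one
      (coin_h1 hU n) (coin_h2 hU n) (hA2 n) (coin_d_ne hU hA2 n)]
  rw [Tmat_mulVec]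
  constructor
  · rintro ⟨e1, e2⟩
    funext i
    fin_cases i
    · simpa [Pivec] using e1
    · have hn : n - 1 + 1 = n := by ring
      simpa [Pivec, hn] using e2
  · intro h
    have h0 := congrFun h 0
    have h1 := congrFun h 1
    have hn : n - 1 + 1 = n := by ring
    constructor
    · simpa [Pivec] using h0
    · simpa [Pivec, hn] using h1

lemma isSol_iff_transfer (hU : CoinsUnitary U) (hA2 : A2 U) (ξ : ℂ) (ψ : ℤ → C2) :
    IsSol U (Complex.exp (-(Complex.I * ξ))) ψ ↔
      ∀ n : ℤ, Pivec ψ (n-1) = (Tmat U ξ n).mulVec (Pivec ψ n) := by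
  rw [isSol_iff]
  constructor
  · intro h n
    rw [← step_iff hU hA2]
    have e1 := (h (n-1)).1
    have e2 := (h (n+1)).2
    have hn1 : n - 1 + 1 = n := by ring
    have hn2 : n + 1 - 1 = n := by ring
    rw [hn1] at e1
    rw [hn2] at e2
    exact ⟨e1, e2⟩
  · intro h n
    have s1 := ((step_iff hU hA2 ξ ψ (n+1)).mpr (h (n+1))).1
    have s2 := ((step_iff hU hA2 ξ ψ (n-1)).mpr (h (n-1))).2
    have hn1 : n + 1 - 1 = n := by ring
    have hn2 : n - 1 + 1 = n := by ring
    rw [hn1] at s1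
    rw [hn2] at s2
    exact ⟨s1, s2⟩

end AuxQW

section AuxVanish

variable {U : ℤ → Matrix (Fin 2) (Fin 2) ℂ} {μ ξ : ℂ} {ψ : ℤ → C2}

/-- a generalized eigenfunction vanishing at one site vanishes identically -/
lemma sol_vanish (hU : CoinsUnitary U) (hA2 : A2 U) (hμ : μ ≠ 0)
    (hsol : IsSol U μ ψ) (m : ℤ) (hm : ψ m = 0) : ψ = 0 := by
  have h := isSol_iff.mp hsol
  have up : ∀ k : ℕ, ψ (m + k) = 0 := by
    intro k
    induction k with
    | zero => simpa using hm
    | succ k ih =>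
      set n := m + k with hn
      have e1 := (h (n+1)).2
      have hc : n + 1 - 1 = n := by ring
      rw [hc, ih] at e1
      have hy : ψ (n+1) 1 = 0 := by
        have h0 : μ * ψ (n+1) 1 = 0 := by rw [← e1]; simp
        exact (mul_eq_zero.mp h0).resolve_left hμ
      have e0 := (h n).1
      rw [ih, hy] at e0
      have hx : ψ (n+1) 0 = 0 := by
        have h0 : U (n+1) 0 0 * ψ (n+1) 0 = 0 := by
          rw [← add_zero (U (n+1) 0 0 * ψ (n+1) 0)]
          simpa using e0
        exact (mul_eq_zero.mp h0).resolve_left (hA2 (n+1))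
      have : ψ (n + 1) = 0 := by
        funext i; fin_cases i
        · exact hx
        · exact hy
      have hc2 : m + (k+1 : ℕ) = n + 1 := by push_cast [hn]; ring
      rw [hc2]
      exact this
  have down : ∀ k : ℕ, ψ (m - k) = 0 := by
    intro k
    induction k with
    | zero => simpa using hm
    | succ k ih =>
      set n := m - k with hn
      have e0 := (h (n-1)).1
      have hc : n - 1 + 1 = n := by ring
      rw [hc, ih] at e0
      have hx : ψ (n-1) 0 = 0 := by
        have h0 : μ * ψ (n-1) 0 = 0 := by rw [← e0]; simp
        exact (mul_eq_zero.mp h0).resolve_left hμ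
      have e1 := (h n).2
      rw [ih, hx] at e1
      have hy : ψ (n-1) 1 = 0 := by
        have h0 : U (n-1) 1 1 * ψ (n-1) 1 = 0 := by
          rw [← zero_add (U (n-1) 1 1 * ψ (n-1) 1)]
          simpa using e1
        exact (mul_eq_zero.mp h0).resolve_left (coin_d_ne hU hA2 (n-1))
      have : ψ (n - 1) = 0 := by
        funext i; fin_cases i
        · exact hx
        · exact hy
      have hc2 : m - (k+1 : ℕ) = n - 1 := by push_cast [hn]; ring
      rw [hc2]
      exact this
  funext n
  rcases le_total m n with hle | hle
  · have hk : n = m + ((n - m).toNat : ℤ) := by omega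
    rw [hk]
    exact up (n - m).toNat
  · have hk : n = m - ((m - n).toNat : ℤ) := by omega
    rw [hk]
    exact down (m - n).toNat

/-- iterating the transfer relation -/
lemma Pivec_prod (ξ : ℂ) (htr : ∀ n : ℤ, Pivec ψ (n-1) = (Tmat U ξ n).mulVec (Pivec ψ n)) :
    ∀ m : ℕ, Pivec ψ (-1) =
      (((List.range m).map (fun k : ℕ => Tmat U ξ (k : ℤ))).prod).mulVec
        (Pivec ψ ((m : ℤ) - 1)) := by
  intro m
  induction m with
  | zero => simp
  | succ m ih =>
    rw [List.range_succ, List.map_append, List.prod_append]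
    have hstep := htr (m : ℤ)
    have hp : Pivec ψ (((m+1 : ℕ) : ℤ) - 1) = Pivec ψ (m : ℤ) := by
      norm_num
    rw [hp, ← Matrix.mulVec_mulVec]
    simp only [List.map_cons, List.map_nil, List.prod_cons, List.prod_nil, mul_one]
    rw [← hstep]
    exact ih

lemma TT_eq (n0 : ℕ) (U : ℤ → Matrix (Fin 2) (Fin 2) ℂ) (ξ : ℂ) :
    TT n0 U ξ = ((List.range (n0+1)).map (fun k : ℕ => Tmat U ξ (k:ℤ))).prod := by
  unfold TT
  simp
  rw [List.flatMap_def, List.map_flatten, List.map_map]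
  simp [Function.comp_def]

end AuxVanish

section AuxK

variable {n0 : ℕ} {U : ℤ → Matrix (Fin 2) (Fin 2) ℂ}

lemma sum_coe_eq (t : ℕ) (f : Fin (n0+1) → ℂ) :
    (∑ q : Fin (n0+1), if (q : ℕ) = t then f q else 0) =
      if h : t < n0+1 then f ⟨t, h⟩ else 0 := by
  split_ifs with h
  · rw [Finset.sum_eq_single (⟨t, h⟩ : Fin (n0+1))]
    · simp
    · intro q _ hq
      rw [if_neg]
      intro hc
      exact hq (Fin.ext hc)
    · simp
  · apply Finset.sum_eq_zero
    intro q _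
    rw [if_neg]
    have := q.isLt
    omega

lemma Kmat_mulVec_zero (v : Fin (n0+1) × Fin 2 → ℂ) (m : Fin (n0+1)) :
    (Kmat n0 U).mulVec v (m, 0) =
      if h : (m : ℕ) < n0 then
        U (((m : ℕ) : ℤ) + 1) 0 0 * v (⟨(m : ℕ)+1, by omega⟩, 0) +
          U (((m : ℕ) : ℤ) + 1) 0 1 * v (⟨(m : ℕ)+1, by omega⟩, 1)
      else 0 := by
  unfold Kmat Matrix.mulVec dotProduct
  rw [Fintype.sum_prod_type]
  have : ∀ q1 : Fin (n0+1), (∑ q2 : Fin 2, Matrix.of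
      (fun p q : Fin (n0+1) × Fin 2 =>
        (if p.2 = 0 ∧ (q.1 : ℕ) = (p.1 : ℕ) + 1 then U (((p.1 : ℕ) : ℤ) + 1) 0 q.2 else 0) +
        (if p.2 = 1 ∧ (q.1 : ℕ) + 1 = (p.1 : ℕ) then U ((q.1 : ℕ) : ℤ) 1 q.2 else 0))
        (m, 0) (q1, q2) * v (q1, q2)) =
      if (q1 : ℕ) = (m : ℕ) + 1 then
        U (((m : ℕ) : ℤ) + 1) 0 0 * v (q1, 0) + U (((m : ℕ) : ℤ) + 1) 0 1 * v (q1, 1)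
      else 0 := by
    intro q1
    rw [Fin.sum_univ_two]
    by_cases hq : (q1 : ℕ) = (m : ℕ) + 1 <;>
      simp [hq, Matrix.of_apply]
  rw [Finset.sum_congr rfl (fun q1 _ => this q1), sum_coe_eq ((m : ℕ)+1)
    (fun q1 => U (((m : ℕ) : ℤ) + 1) 0 0 * v (q1, 0) + U (((m : ℕ) : ℤ) + 1) 0 1 * v (q1, 1))]
  have hlt : (m : ℕ) + 1 < n0 + 1 ↔ (m : ℕ) < n0 := by omega
  split_ifs with h1 h2 h2 <;> first | rfl | omega

lemma Kmat_mulVec_one (v : Fin (n0+1) × Fin 2 → ℂ) (m : Fin (n0+1)) :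
    (Kmat n0 U).mulVec v (m, 1) =
      if h : 0 < (m : ℕ) then
        U (((m : ℕ) - 1 : ℕ) : ℤ) 1 0 * v (⟨(m : ℕ)-1, by omega⟩, 0) +
          U (((m : ℕ) - 1 : ℕ) : ℤ) 1 1 * v (⟨(m : ℕ)-1, by omega⟩, 1)
      else 0 := by
  unfold Kmat Matrix.mulVec dotProduct
  rw [Fintype.sum_prod_type]
  have : ∀ q1 : Fin (n0+1), (∑ q2 : Fin 2, Matrix.of
      (fun p q : Fin (n0+1) × Fin 2 =>
        (if p.2 = 0 ∧ (q.1 : ℕ) = (p.1 : ℕ) + 1 then U (((p.1 : ℕ) : ℤ) + 1) 0 q.2 else 0) +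
        (if p.2 = 1 ∧ (q.1 : ℕ) + 1 = (p.1 : ℕ) then U ((q.1 : ℕ) : ℤ) 1 q.2 else 0))
        (m, 1) (q1, q2) * v (q1, q2)) =
      if (q1 : ℕ) = (m : ℕ) - 1 ∧ 0 < (m : ℕ) then
        U ((q1 : ℕ) : ℤ) 1 0 * v (q1, 0) + U ((q1 : ℕ) : ℤ) 1 1 * v (q1, 1)
      else 0 := by
    intro q1
    rw [Fin.sum_univ_two]
    by_cases hq : (q1 : ℕ) + 1 = (m : ℕ)
    · have h2 : (q1 : ℕ) = (m : ℕ) - 1 ∧ 0 < (m : ℕ) := by omega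
      have h3 : (m : ℕ) - 1 + 1 = (m : ℕ) := by omega
      simp [hq, h2, h3, Matrix.of_apply]
    · have : ¬((q1 : ℕ) = (m : ℕ) - 1 ∧ 0 < (m : ℕ)) := by omega
      simp [hq, this, Matrix.of_apply]
      intro h1 h2
      exact absurd ⟨h1, h2⟩ this
  rw [Finset.sum_congr rfl (fun q1 _ => this q1)]
  by_cases hm : 0 < (m : ℕ)
  · rw [dif_pos hm]
    have : ∀ q1 : Fin (n0+1),
        (if (q1 : ℕ) = (m : ℕ) - 1 ∧ 0 < (m : ℕ) then
          U ((q1 : ℕ) : ℤ) 1 0 * v (q1, 0) + U ((q1 : ℕ) : ℤ) 1 1 * v (q1, 1) else 0) =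
        (if (q1 : ℕ) = (m : ℕ) - 1 then
          U ((q1 : ℕ) : ℤ) 1 0 * v (q1, 0) + U ((q1 : ℕ) : ℤ) 1 1 * v (q1, 1) else 0) := by
      intro q1
      by_cases hq : (q1 : ℕ) = (m : ℕ) - 1 <;> simp [hq, hm]
    rw [Finset.sum_congr rfl (fun q1 _ => this q1), sum_coe_eq ((m : ℕ) - 1)
      (fun q1 => U ((q1 : ℕ) : ℤ) 1 0 * v (q1, 0) + U ((q1 : ℕ) : ℤ) 1 1 * v (q1, 1))]
    rw [dif_pos (by omega : (m : ℕ) - 1 < n0 + 1)]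
  · rw [dif_neg hm]
    apply Finset.sum_eq_zero
    intro q1 _
    rw [if_neg]
    omega

end AuxK

section AuxMain

variable {n0 : ℕ} {U : ℤ → Matrix (Fin 2) (Fin 2) ℂ}

lemma out_to_eig (hU : CoinsUnitary U) (hA2 : A2 U) (ξ : ℂ) (ψ : ℤ → C2)
    (hne : ψ ≠ 0) (hout : Outgoing n0 ψ)
    (hsol : IsSol U (Complex.exp (-(Complex.I * ξ))) ψ) :
    HasEig n0 U (Complex.exp (-(Complex.I * ξ))) := by
  set μ := Complex.exp (-(Complex.I * ξ)) with hμdef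
  refine ⟨resK n0 ψ, ?_, ?_⟩
  · intro h0
    apply hne
    apply sol_vanish hU hA2 mu_ne_zero hsol 0
    funext i
    have := congrFun h0 (⟨0, by omega⟩, i)
    simpa [resK] using this
  · funext p
    obtain ⟨m, i⟩ := p
    have hs0 : (μ • resK n0 ψ) (m, 0) = μ * ψ ((m : ℕ) : ℤ) 0 := rfl
    have hs1 : (μ • resK n0 ψ) (m, 1) = μ * ψ ((m : ℕ) : ℤ) 1 := rfl
    fin_cases i
    · show (Kmat n0 U *ᵥ resK n0 ψ) (m, 0) = (μ • resK n0 ψ) (m, 0)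
      rw [Kmat_mulVec_zero, hs0]
      split_ifs with h
      · have e0 := (isSol_iff.mp hsol ((m : ℕ) : ℤ)).1
        have hc : (((m : ℕ) + 1 : ℕ) : ℤ) = ((m : ℕ) : ℤ) + 1 := by push_cast; ring
        simp only [resK]
        rw [hc]
        exact e0
      · have hm : (m : ℕ) = n0 := by omega
        have h2 := (hout 0).2
        have : ψ ((m : ℕ) : ℤ) 0 = 0 := by
          rw [hm]
          simpa using h2
        rw [this, mul_zero]
    · show (Kmat n0 U *ᵥ resK n0 ψ) (m, 1) = (μ • resK n0 ψ) (m, 1)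
      rw [Kmat_mulVec_one, hs1]
      split_ifs with h
      · have e1 := (isSol_iff.mp hsol ((m : ℕ) : ℤ)).2
        have hc : (((m : ℕ) - 1 : ℕ) : ℤ) = ((m : ℕ) : ℤ) - 1 := by omega
        simp only [resK]
        rw [hc]
        exact e1
      · have hm : (m : ℕ) = 0 := by omega
        have h1 := (hout 0).1
        have : ψ ((m : ℕ) : ℤ) 1 = 0 := by
          rw [hm]
          simpa using h1
        rw [this, mul_zero]

end AuxMain

section AuxExt

variable {n0 : ℕ} {U : ℤ → Matrix (Fin 2) (Fin 2) ℂ}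

lemma exp_shift (ξ X s t : ℂ) (h : s = -(Complex.I*ξ) + t) :
    Complex.exp s * X = Complex.exp (-(Complex.I*ξ)) * (Complex.exp t * X) := by
  rw [← mul_assoc, ← Complex.exp_add, h]

lemma eig_to_out (hU : CoinsUnitary U) (hA1 : A1 n0 U) (hA2 : A2 U) (ξ : ℂ)
    (he : HasEig n0 U (Complex.exp (-(Complex.I * ξ)))) :
    ∃ ψ : ℤ → C2, ψ ≠ 0 ∧ Outgoing n0 ψ ∧
      IsSol U (Complex.exp (-(Complex.I * ξ))) ψ := by
  obtain ⟨v, hv, hKv⟩ := he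
  set μ := Complex.exp (-(Complex.I * ξ)) with hμdef
  -- boundary values of the eigenvector
  have hvn0 : v (⟨n0, by omega⟩, 0) = 0 := by
    have hm := congrFun hKv (⟨n0, by omega⟩, 0)
    rw [Kmat_mulVec_zero, dif_neg (by simp)] at hm
    have : μ * v (⟨n0, by omega⟩, 0) = 0 := hm.symm
    exact (mul_eq_zero.mp this).resolve_left mu_ne_zero
  have hv01 : v (⟨0, by omega⟩, 1) = 0 := by
    have hm := congrFun hKv (⟨0, by omega⟩, 1)
    rw [Kmat_mulVec_one, dif_neg (by simp)] at hm
    have : μ * v (⟨0, by omega⟩, 1) = 0 := hm.symm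
    exact (mul_eq_zero.mp this).resolve_left mu_ne_zero
  set Av := U 0 0 0 * v (⟨0, by omega⟩, 0) + U 0 0 1 * v (⟨0, by omega⟩, 1) with hAv
  set Bv := U (n0 : ℤ) 1 0 * v (⟨n0, by omega⟩, 0) +
      U (n0 : ℤ) 1 1 * v (⟨n0, by omega⟩, 1) with hBv
  set ψ : ℤ → C2 := fun n =>
    if h : 0 ≤ n ∧ n ≤ (n0 : ℤ) then (fun i => v (⟨n.toNat, by omega⟩, i))
    else if n < 0 then ![Complex.exp (Complex.I * ξ * ((-n : ℤ) : ℂ)) * Av, 0]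
    else ![0, Complex.exp (Complex.I * ξ * ((n - (n0 : ℤ) : ℤ) : ℂ)) * Bv] with hψ
  have hmid : ∀ n : ℤ, (h : 0 ≤ n ∧ n ≤ (n0 : ℤ)) →
      ψ n = fun i => v (⟨n.toNat, by omega⟩, i) := by
    intro n h
    simp only [hψ]
    rw [dif_pos h]
  have hleft : ∀ n : ℤ, n < 0 →
      ψ n = ![Complex.exp (Complex.I * ξ * ((-n : ℤ) : ℂ)) * Av, 0] := by
    intro n h
    simp only [hψ]
    rw [dif_neg (by omega), if_pos h]
  have hright : ∀ n : ℤ, (n0 : ℤ) < n →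
      ψ n = ![0, Complex.exp (Complex.I * ξ * ((n - (n0 : ℤ) : ℤ) : ℂ)) * Bv] := by
    intro n h
    simp only [hψ]
    rw [dif_neg (by omega), if_neg (by omega)]
  -- the interior rows of the eigenvalue equation
  have hrow0 : ∀ n : ℤ, 0 ≤ n → n < (n0 : ℤ) →
      U (n+1) 0 0 * ψ (n+1) 0 + U (n+1) 0 1 * ψ (n+1) 1 = μ * ψ n 0 := by
    intro n h0 hn
    have hm := congrFun hKv (⟨n.toNat, by omega⟩, 0)
    rw [Kmat_mulVec_zero, dif_pos (by simp; omega)] at hm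
    rw [hmid n ⟨h0, by omega⟩, hmid (n+1) ⟨by omega, by omega⟩]
    have e1 : ((n.toNat : ℕ) : ℤ) + 1 = n + 1 := by omega
    have e2 : (⟨(n+1).toNat, by omega⟩ : Fin (n0+1)) = ⟨n.toNat + 1, by omega⟩ :=
      Fin.ext (by simp only [Fin.val_mk]; omega)
    simp only [e2]
    simp only [Fin.val_mk] at hm
    have eU : U ((n.toNat : ℤ) + 1) = U (n+1) := by rw [e1]
    rw [eU] at hm
    exact hm
  have hrow1 : ∀ n : ℤ, 1 ≤ n → n ≤ (n0 : ℤ) →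
      U (n-1) 1 0 * ψ (n-1) 0 + U (n-1) 1 1 * ψ (n-1) 1 = μ * ψ n 1 := by
    intro n h1 hn
    have hm := congrFun hKv (⟨n.toNat, by omega⟩, 1)
    rw [Kmat_mulVec_one, dif_pos (by simp; omega)] at hm
    rw [hmid n ⟨by omega, hn⟩, hmid (n-1) ⟨by omega, by omega⟩]
    have e1 : ((n.toNat - 1 : ℕ) : ℤ) = n - 1 := by omega
    have e2 : (⟨(n-1).toNat, by omega⟩ : Fin (n0+1)) = ⟨n.toNat - 1, by omega⟩ :=
      Fin.ext (by simp only [Fin.val_mk]; omega)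
    simp only [e2]
    simp only [Fin.val_mk] at hm
    have eU : U (((n.toNat - 1 : ℕ) : ℤ)) = U (n-1) := by rw [e1]
    rw [eU] at hm
    exact hm
  refine ⟨ψ, ?_, ?_, ?_⟩
  · -- nonzero
    intro h0
    apply hv
    funext p
    obtain ⟨m, i⟩ := p
    have h1 := congrFun (congrFun h0 ((m : ℕ) : ℤ)) i
    rw [hmid ((m : ℕ) : ℤ) ⟨by omega, by omega⟩] at h1
    have e2 : (⟨((m : ℕ) : ℤ).toNat, by omega⟩ : Fin (n0+1)) = m := Fin.ext (by simp)
    rw [e2] at h1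
    exact h1
  · -- outgoing
    intro k
    constructor
    · rcases Nat.eq_zero_or_pos k with hk | hk
      · subst hk
        have h00 : (-((0:ℕ):ℤ)) = (0:ℤ) := by norm_num
        rw [h00, hmid 0 ⟨le_refl _, by omega⟩]
        exact hv01
      · rw [hleft (-(k : ℤ)) (by omega)]
        simp
    · rcases Nat.eq_zero_or_pos k with hk | hk
      · subst hk
        have h00 : ((n0 : ℤ) + ((0:ℕ):ℤ)) = ((n0 : ℕ) : ℤ) := by norm_num
        rw [h00, hmid (n0 : ℤ) ⟨by omega, le_refl _⟩]
        have e2 : (⟨((n0 : ℕ) : ℤ).toNat, by omega⟩ : Fin (n0+1)) = ⟨n0, by omega⟩ :=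
          Fin.ext (by simp)
        rw [e2]
        exact hvn0
      · rw [hright ((n0 : ℤ) + k) (by omega)]
        simp
  · -- solution
    rw [isSol_iff]
    intro n
    constructor
    · -- first component equation at site n
      by_cases hc1 : n ≤ -2
      · have hU1 : U (n+1) = 1 := hA1 _ (Or.inl (by omega))
        rw [hleft n (by omega), hleft (n+1) (by omega), hU1]
        simp only [Matrix.cons_val_zero, Matrix.cons_val_one, Matrix.head_cons,
          Matrix.one_apply_eq, Matrix.one_apply_ne (by decide : (0 : Fin 2) ≠ 1),
          one_mul, mul_zero, add_zero]
        exact exp_shift ξ Av _ _ (by push_cast; ring)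
      by_cases hc2 : n = -1
      · subst hc2
        have e0 : (-1 : ℤ) + 1 = 0 := by norm_num
        rw [e0, hleft (-1) (by omega), hmid 0 ⟨le_refl _, by omega⟩]
        simp only [Matrix.cons_val_zero]
        have harg : μ * Complex.exp (Complex.I * ξ * ((-(-1) : ℤ) : ℂ)) = 1 := by
          rw [hμdef, ← Complex.exp_add]
          norm_num
        calc U 0 0 0 * v (⟨(0:ℤ).toNat, by omega⟩, 0) + U 0 0 1 * v (⟨(0:ℤ).toNat, by omega⟩, 1)
            = Av := by rw [hAv]; rfl
          _ = μ * (Complex.exp (Complex.I * ξ * ((-(-1) : ℤ) : ℂ)) * Av) := by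
              rw [← mul_assoc, harg, one_mul]
      by_cases hc3 : n < (n0 : ℤ)
      · exact hrow0 n (by omega) hc3
      by_cases hc4 : n = (n0 : ℤ)
      · subst hc4
        have hU1 : U ((n0 : ℤ)+1) = 1 := hA1 _ (Or.inr (by omega))
        rw [hU1, hright ((n0 : ℤ)+1) (by omega), hmid (n0 : ℤ) ⟨by omega, le_refl _⟩]
        simp only [Matrix.cons_val_zero, Matrix.cons_val_one, Matrix.head_cons,
          Matrix.one_apply_eq, Matrix.one_apply_ne (by decide : (0 : Fin 2) ≠ 1),
          one_mul, mul_zero, zero_mul, add_zero, zero_add]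
        have e2 : (⟨((n0 : ℕ) : ℤ).toNat, by omega⟩ : Fin (n0+1)) = ⟨n0, by omega⟩ :=
          Fin.ext (by simp)
        rw [e2, hvn0, mul_zero]
      · -- n > n0
        have hU1 : U (n+1) = 1 := hA1 _ (Or.inr (by omega))
        rw [hU1, hright n (by omega), hright (n+1) (by omega)]
        simp only [Matrix.cons_val_zero, Matrix.cons_val_one, Matrix.head_cons,
          Matrix.one_apply_eq, Matrix.one_apply_ne (by decide : (0 : Fin 2) ≠ 1),
          one_mul, mul_zero, zero_mul, add_zero, zero_add]
    · -- second component equation at site n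
      by_cases hc1 : n ≤ -1
      · have hU1 : U (n-1) = 1 := hA1 _ (Or.inl (by omega))
        rw [hU1, hleft n (by omega), hleft (n-1) (by omega)]
        simp
      by_cases hc2 : n = 0
      · subst hc2
        have hU1 : U ((0:ℤ)-1) = 1 := hA1 _ (Or.inl (by omega))
        rw [hU1, hleft ((0:ℤ)-1) (by omega), hmid 0 ⟨le_refl _, by omega⟩]
        simp only [Matrix.cons_val_one, Matrix.head_cons, Matrix.cons_val_zero]
        rw [show v (⟨(0:ℤ).toNat, by omega⟩, 1) = 0 from hv01]
        simp
      by_cases hc3 : n ≤ (n0 : ℤ)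
      · exact hrow1 n (by omega) hc3
      by_cases hc4 : n = (n0 : ℤ) + 1
      · subst hc4
        have e0 : (n0 : ℤ) + 1 - 1 = (n0 : ℤ) := by ring
        rw [e0, hright ((n0 : ℤ)+1) (by omega), hmid (n0 : ℤ) ⟨by omega, le_refl _⟩]
        simp only [Matrix.cons_val_one, Matrix.head_cons, Matrix.cons_val_zero]
        have harg : μ * Complex.exp (Complex.I * ξ * (((n0 : ℤ) + 1 - (n0 : ℤ) : ℤ) : ℂ)) = 1 := by
          rw [hμdef, ← Complex.exp_add]
          norm_num
        rw [← mul_assoc, harg, one_mul, hBv]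
        rfl
      · -- n ≥ n0 + 2
        have hU1 : U (n-1) = 1 := hA1 _ (Or.inr (by omega))
        rw [hU1, hright n (by omega), hright (n-1) (by omega)]
        simp only [Matrix.cons_val_one, Matrix.head_cons, Matrix.cons_val_zero,
          Matrix.one_apply_eq, Matrix.one_apply_ne (by decide : (1 : Fin 2) ≠ 0),
          one_mul, mul_zero, add_zero, zero_add, zero_mul]
        exact exp_shift ξ Bv _ _ (by push_cast; ring)

end AuxExt

section AuxTT

variable {n0 : ℕ} {U : ℤ → Matrix (Fin 2) (Fin 2) ℂ}

lemma out_to_TT (hU : CoinsUnitary U) (hA2 : A2 U) (ξ : ℂ) (ψ : ℤ → C2)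
    (hne : ψ ≠ 0) (hout : Outgoing n0 ψ)
    (hsol : IsSol U (Complex.exp (-(Complex.I * ξ))) ψ) :
    TT n0 U ξ 1 1 = 0 := by
  have htr := (isSol_iff_transfer hU hA2 ξ ψ).mp hsol
  have hprod := Pivec_prod ξ htr (n0+1)
  rw [← TT_eq n0 U ξ] at hprod
  have hcast : ((n0+1 : ℕ) : ℤ) - 1 = (n0 : ℤ) := by push_cast; ring
  rw [hcast] at hprod
  have h1 := congrFun hprod 1
  have hx : ψ ((n0:ℤ)) 0 = 0 := by simpa using (hout 0).2
  have hy0 : ψ (0:ℤ) 1 = 0 := by simpa using (hout 0).1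
  have hyne : ψ ((n0:ℤ)+1) 1 ≠ 0 := by
    intro h0
    apply hne
    apply sol_vanish hU hA2 mu_ne_zero hsol ((n0:ℤ)+1)
    funext i
    fin_cases i
    · simpa using (hout 1).2
    · exact h0
  simp only [Pivec, Matrix.mulVec, dotProduct, Fin.sum_univ_two] at h1
  have e0 : (-1 : ℤ) + 1 = 0 := by norm_num
  rw [e0] at h1
  simp only [Matrix.cons_val_zero, Matrix.cons_val_one, Matrix.head_cons] at h1
  rw [hy0, hx, mul_zero, zero_add] at h1
  exact (mul_eq_zero.mp h1.symm).resolve_right hyne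

end AuxTT

section AuxW

variable {n0 : ℕ} {U : ℤ → Matrix (Fin 2) (Fin 2) ℂ}

lemma exp_shift' (ξ s t : ℂ) (h : s = -(Complex.I*ξ) + t) :
    Complex.exp s = Complex.exp (-(Complex.I*ξ)) * Complex.exp t := by
  rw [← Complex.exp_add, h]

lemma Tmat_one_mulVec {ξ : ℂ} {n : ℤ} (hone : U n = 1) (x : C2) :
    (Tmat U ξ n).mulVec x =
      ![Complex.exp (Complex.I*ξ) * x 0, Complex.exp (-(Complex.I*ξ)) * x 1] := by
  rw [Tmat_mulVec, hone]
  funext i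
  fin_cases i <;> simp [Matrix.one_apply]

lemma TT_to_out (hU : CoinsUnitary U) (hA1 : A1 n0 U) (hA2 : A2 U) (ξ : ℂ)
    (hTT : TT n0 U ξ 1 1 = 0) :
    ∃ ψ : ℤ → C2, ψ ≠ 0 ∧ Outgoing n0 ψ ∧
      IsSol U (Complex.exp (-(Complex.I * ξ))) ψ := by
  set μ := Complex.exp (-(Complex.I * ξ)) with hμdef
  set w : ℤ → C2 := fun n =>
    if (n0 : ℤ) ≤ n then ![0, Complex.exp (Complex.I * ξ * ((n - (n0:ℤ) : ℤ) : ℂ))]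
    else (((List.range ((n0 - n).toNat)).map
        (fun k : ℕ => Tmat U ξ (n + 1 + k))).prod).mulVec ![0, 1] with hw
  have htop : ∀ n : ℤ, (n0 : ℤ) ≤ n →
      w n = ![0, Complex.exp (Complex.I * ξ * ((n - (n0:ℤ) : ℤ) : ℂ))] := by
    intro n h
    simp only [hw]
    rw [if_pos h]
  have hbot : ∀ n : ℤ, n < (n0 : ℤ) →
      w n = (((List.range ((n0 - n).toNat)).map
        (fun k : ℕ => Tmat U ξ (n + 1 + k))).prod).mulVec ![0, 1] := by
    intro n h
    simp only [hw]
    rw [if_neg (by omega)]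
  have htrw : ∀ n : ℤ, w (n-1) = (Tmat U ξ n).mulVec (w n) := by
    intro n
    by_cases hc1 : (n0 : ℤ) ≤ n - 1
    · have hU1 : U n = 1 := hA1 n (Or.inr (by omega))
      rw [htop (n-1) hc1, htop n (by omega), Tmat_one_mulVec hU1]
      funext i
      fin_cases i
      · simp
      · simp only [Matrix.cons_val_one, Matrix.head_cons]
        exact exp_shift' ξ _ _ (by push_cast; ring)
    · by_cases hc2 : n = (n0 : ℤ)
      · subst hc2
        rw [hbot ((n0:ℤ)-1) (by omega), htop (n0:ℤ) (by omega)]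
        have e1 : ((n0:ℤ) - ((n0:ℤ)-1)).toNat = 1 := by omega
        rw [e1]
        have e4 : List.range 1 = [0] := rfl
        rw [e4]
        simp only [List.map_cons, List.map_nil, List.prod_cons, List.prod_nil, mul_one]
        have e3 : (n0:ℤ) - 1 + 1 + ((0:ℕ):ℤ) = (n0:ℤ) := by push_cast; ring
        rw [e3]
        have e5 : (![0, Complex.exp (Complex.I * ξ * (((n0:ℤ) - (n0:ℤ) : ℤ) : ℂ))] : C2) =
            ![0, 1] := by
          rw [show ((n0:ℤ) - (n0:ℤ) : ℤ) = 0 by ring]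
          norm_num
        rw [e5]
      · -- n < n0
        have hn : n < (n0 : ℤ) := by omega
        rw [hbot (n-1) (by omega), hbot n hn]
        have e1 : ((n0:ℤ) - (n-1)).toNat = ((n0:ℤ) - n).toNat + 1 := by omega
        rw [e1, List.range_succ_eq_map, List.map_cons, List.map_map, List.prod_cons]
        have e2 : n - 1 + 1 + ((0:ℕ):ℤ) = n := by push_cast; ring
        rw [e2, ← Matrix.mulVec_mulVec]
        have hl : List.map ((fun k : ℕ => Tmat U ξ (n - 1 + 1 + (k:ℤ))) ∘ Nat.succ)
            (List.range (((n0:ℤ) - n).toNat)) =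
            List.map (fun k : ℕ => Tmat U ξ (n + 1 + (k:ℤ)))
            (List.range (((n0:ℤ) - n).toNat)) := by
          apply List.map_congr_left
          intro k _
          show Tmat U ξ (n - 1 + 1 + ((k+1 : ℕ) : ℤ)) = Tmat U ξ (n + 1 + (k : ℤ))
          congr 1
          push_cast
          ring
        rw [hl]
  -- the solution
  set ψ : ℤ → C2 := fun n => ![w n 0, w (n-1) 1] with hψ
  have hPiv : ∀ n : ℤ, Pivec ψ n = w n := by
    intro n
    funext i
    fin_cases i
    · rfl
    · show ψ (n+1) 1 = w n 1
      simp only [hψ]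
      rw [show n + 1 - 1 = n by ring]
      rfl
  have hsol : IsSol U μ ψ := by
    rw [hμdef, isSol_iff_transfer hU hA2 ξ ψ]
    intro n
    rw [hPiv, hPiv]
    exact htrw n
  -- w is outgoing on the left
  have hwneg : ∀ k : ℕ, w (-1 - (k : ℤ)) 1 = 0 := by
    intro k
    induction k with
    | zero =>
      have hw1 : w (-1) = (TT n0 U ξ).mulVec ![0, 1] := by
        rw [hbot (-1) (by omega), TT_eq]
        have e1 : ((n0:ℤ) - (-1)).toNat = n0 + 1 := by omega
        rw [e1]
        have hl : List.map (fun k : ℕ => Tmat U ξ ((-1:ℤ) + 1 + (k:ℤ)))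
            (List.range (n0+1)) =
            List.map (fun k : ℕ => Tmat U ξ (k:ℤ)) (List.range (n0+1)) := by
          apply List.map_congr_left
          intro k _
          congr 1
          push_cast
          ring
        rw [hl]
      have h2 : w (-1) 1 = TT n0 U ξ 1 0 * 0 + TT n0 U ξ 1 1 * 1 := by
        rw [hw1]
        simp [Matrix.mulVec, dotProduct, Fin.sum_univ_two]
      rw [show (-1 : ℤ) - ((0:ℕ):ℤ) = -1 by norm_num, h2, hTT]
      ring
    | succ k ih =>
      have hstep := htrw (-1 - (k:ℤ))
      have hU1 : U (-1 - (k:ℤ)) = 1 := hA1 _ (Or.inl (by omega))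
      have e1 : (-1 : ℤ) - ((k+1 : ℕ):ℤ) = (-1 - (k:ℤ)) - 1 := by push_cast; ring
      rw [e1, hstep, Tmat_one_mulVec hU1]
      simp only [Matrix.cons_val_one, Matrix.head_cons, Matrix.cons_val_zero]
      rw [ih, mul_zero]
  refine ⟨ψ, ?_, ?_, ?_⟩
  · intro h0
    have h1 := congrFun (congrFun h0 ((n0:ℤ)+1)) 1
    simp only [hψ] at h1
    rw [show (n0:ℤ) + 1 - 1 = (n0:ℤ) by ring] at h1
    rw [htop (n0:ℤ) le_rfl] at h1
    simp only [Matrix.cons_val_one, Matrix.head_cons] at h1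
    rw [show ((n0:ℤ) - (n0:ℤ) : ℤ) = 0 by ring] at h1
    norm_num at h1
  · intro k
    constructor
    · show w (-(k:ℤ) - 1) 1 = 0
      rw [show -(k:ℤ) - 1 = -1 - (k:ℤ) by ring]
      exact hwneg k
    · show w ((n0:ℤ) + (k:ℤ)) 0 = 0
      rw [htop ((n0:ℤ) + k) (by omega)]
      rfl
  · exact hsol

end AuxW

/-- equivalent characterizations of resonances. -/
theorem stmt_7 (n0 : ℕ) (U : ℤ → Matrix (Fin 2) (Fin 2) ℂ)
    (hU : CoinsUnitary U) (hA1 : A1 n0 U) (hA2 : A2 U) (ξ : ℂ) :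
    ((∃ ψ : ℤ → C2, ψ ≠ 0 ∧ Outgoing n0 ψ ∧
        IsSol U (Complex.exp (-(Complex.I * ξ))) ψ) ↔
      HasEig n0 U (Complex.exp (-(Complex.I * ξ)))) ∧
    (HasEig n0 U (Complex.exp (-(Complex.I * ξ))) ↔ TT n0 U ξ 1 1 = 0) := by
  constructor
  · constructor
    · rintro ⟨ψ, h1, h2, h3⟩
      exact out_to_eig hU hA2 ξ ψ h1 h2 h3
    · intro he
      exact eig_to_out hU hA1 hA2 ξ he
  · constructor
    · intro he
      obtain ⟨ψ, h1, h2, h3⟩ := eig_to_out hU hA1 hA2 ξ he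
      exact out_to_TT hU hA2 ξ ψ h1 h2 h3
    · intro hTT
      obtain ⟨ψ, h1, h2, h3⟩ := TT_to_out hU hA1 hA2 ξ hTT
      exact out_to_eig hU hA2 ξ ψ h1 h2 h3
end
end
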